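/- Let G be the graph with vertex set T and edges {t't : t' ∈ A*_t}. Let t, t' ∈ T be incomparable in the extension order, let α ∈ dom(t) ∩ dom(t') be minimal with t(α) ≠ t'(α), and set s := t↾(α+1). Then every path in G from t to t' contains a vertex belonging to A*_s. -/

import Mathlib

/-- An element of the tree `T`: an injective, co-infinite sequence `t : α → ℕ`
(with `ℕ = {1,2,3,…}`) of countable ordinal length `α`.  We encode such a
sequence as a total function `f : Ordinal → ℕ` taking a *positive* value
exactly on the ordinals `β < len` (the value `0` plays the role of
"undefined", which is harmless since the paper's `ℕ` starts at `1`). -/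
structure CSeq where
  /-- the length (domain) of the sequence, a countable ordinal -/
  len : Ordinal
  len_countable : len < Ordinal.omega 1
  /-- the sequence itself, with `f β = 0` meaning "β is outside the domain" -/
  f : Ordinal → ℕ
  dom_iff : ∀ β, β < len ↔ f β ≠ 0
  inj : ∀ β γ, β < len → γ < len → f β = f γ → β = γ
  coinf : {n : ℕ | n ≠ 0 ∧ n ∉ Set.range f}.Infinite

namespace CSeq

/-- the extension order on `T`: `s ≤ t` iff `s = t ↾ dom s`. -/
def Ext (s t : CSeq) : Prop := ∀ β, s.f β ≠ 0 → t.f β = s.f β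

/-- strict extension: `s < t`. -/
def ExtLt (s t : CSeq) : Prop := s.Ext t ∧ s ≠ t

/-- the image `im t ⊆ ℕ = {1,2,…}` of a sequence `t`. -/
def im (t : CSeq) : Set ℕ := {n | n ≠ 0 ∧ n ∈ Set.range t.f}

/-- `t ∈ Σ(T)`: the length of `t` is a successor ordinal. -/
def IsSucc (t : CSeq) : Prop := ∃ α, t.len = α + 1

/-- `last t`: the last value of a sequence (of successor length). -/
noncomputable def lastVal (t : CSeq) : ℕ := t.f (Ordinal.pred t.len)

/-- the restriction `t ↾ γ` of a sequence `t` to an initial segment `γ ≤ dom t`. -/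
noncomputable def restrict (t : CSeq) (γ : Ordinal) (h : γ ≤ t.len) : CSeq where
  len := γ
  len_countable := lt_of_le_of_lt h t.len_countable
  f := fun β => if β < γ then t.f β else 0
  dom_iff := by
    intro β
    constructor
    · intro hβ
      simpa [hβ] using (t.dom_iff β).1 (lt_of_lt_of_le hβ h)
    · intro hβ
      by_contra hc
      simp [hc] at hβ
  inj := by
    intro β γ' hβ hγ
    simp only [if_pos hβ, if_pos hγ]
    exact t.inj β γ' (lt_of_lt_of_le hβ h) (lt_of_lt_of_le hγ h)
  coinf := t.coinf.mono (by
    rintro n ⟨hn0, hn⟩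
    refine ⟨hn0, ?_⟩
    rintro ⟨β, hβ⟩
    by_cases hb : β < γ
    · exact hn ⟨β, by simpa [hb] using hβ⟩
    · simp only [if_neg hb] at hβ
      exact hn0 hβ.symm)

/-- `t* := t ↾ α` for `t` of successor length `α + 1`: the immediate
predecessor of `t` in the tree. -/
noncomputable def star (t : CSeq) : CSeq := t.restrict (Ordinal.pred t.len) (Ordinal.pred_le_self _)

/-- `A_t := {s ≤ t : s ∈ Σ(T), last s = min (im t \ im s*)}`. -/
def A (t : CSeq) : Set CSeq :=
  {s | s.Ext t ∧ s.IsSucc ∧ s.lastVal = sInf (t.im \ s.star.im)}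

/-- `A*_t := {s* : s ∈ A_t}`. -/
def Astar (t : CSeq) : Set CSeq := star '' A t

/-- the graph `G` with vertex set `T` and edges `{t't : t' ∈ A*_t}`. -/
def G : SimpleGraph CSeq := SimpleGraph.fromRel (fun t' t => t' ∈ Astar t)

/-- the graph `G'` with vertex set `T` and edges `{t't : t' ∈ A_t}`. -/
def G' : SimpleGraph CSeq := SimpleGraph.fromRel (fun t' t => t' ∈ A t)

/-- two `t`–`t'` paths are independent (internally disjoint) if they share no
vertices other than `t` and `t'`. -/
def InternallyDisjoint {t t' : CSeq} (p q : G.Path t t') : Prop :=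
  ∀ v, v ∈ p.1.support → v ∈ q.1.support → v = t ∨ v = t'

/-- `t'` is a `k`-extension of `t ∈ Σ(T)` if `t' > t` and every element of
`im t' \ im t` is greater than `a_{k+1}`, where `a_1 < … < a_{k+1}` are the
`k+1` smallest elements of `ℕ \ (im t ∪ [last t])`.  (Recall `Nat.nth p k` is
the `(k+1)`-st element of `{n | p n}` in increasing order.) -/
def IsKExt (k : ℕ) (t t' : CSeq) : Prop :=
  t.ExtLt t' ∧ ∀ n ∈ t'.im \ t.im,
    Nat.nth (fun m => m ∉ t.im ∧ t.lastVal < m) k < n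

end CSeq

namespace CSeq

theorem ext_trans {a b c : CSeq} (h1 : a.Ext b) (h2 : b.Ext c) : a.Ext c := by
  intro β hβ
  have hb : b.f β ≠ 0 := by rw [h1 β hβ]; exact hβ
  rw [h2 β hb, h1 β hβ]

theorem ext_refl (a : CSeq) : a.Ext a := fun _ _ => rfl

theorem len_le_of_ext {a b : CSeq} (h : a.Ext b) : a.len ≤ b.len := by
  by_contra hc
  push_neg at hc
  have h1 : a.f b.len ≠ 0 := (a.dom_iff _).1 hc
  have h2 : b.f b.len ≠ 0 := by rw [h _ h1]; exact h1
  exact absurd ((b.dom_iff _).2 h2) (lt_irrefl _)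

theorem ext_of_ext_ext {a b c : CSeq} (hac : a.Ext c) (hbc : b.Ext c)
    (hlen : a.len ≤ b.len) : a.Ext b := by
  intro β hβ
  have hb : b.f β ≠ 0 := (b.dom_iff β).1 (lt_of_lt_of_le ((a.dom_iff β).2 hβ) hlen)
  rw [← hbc β hb]
  exact hac β hβ

theorem im_mono {a b : CSeq} (h : a.Ext b) : a.im ⊆ b.im := by
  rintro n ⟨hn0, β, hβ⟩
  have ha : a.f β ≠ 0 := by rw [hβ]; exact hn0
  exact ⟨hn0, β, by rw [h β ha, hβ]⟩

theorem star_ext (w : CSeq) : w.star.Ext w := by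
  intro β hβ
  by_cases h : β < Ordinal.pred w.len
  · simp only [star, restrict, if_pos h]
  · simp only [star, restrict, if_neg h, ne_eq, not_true_eq_false] at hβ

theorem eq_of_ext_of_len_eq {a b : CSeq} (h : a.Ext b) (hl : a.len = b.len) : a = b := by
  have hf : a.f = b.f := by
    funext β
    by_cases hb : a.f β = 0
    · rw [hb]
      by_contra hc
      have hbβ : b.f β ≠ 0 := fun h0 => hc h0.symm
      have hβa : β < a.len := by rw [hl]; exact (b.dom_iff β).2 hbβ
      exact (((a.dom_iff β).1 hβa) hb).elim
    · exact (h β hb).symm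
  cases a; cases b
  simp only at hf hl
  subst hf; subst hl
  rfl

theorem pred_len_eq {w : CSeq} {β : Ordinal} (hw : w.len = β + 1) :
    Ordinal.pred w.len = β := by
  rw [hw, Ordinal.add_one_eq_succ, Ordinal.pred_succ]

theorem lastVal_ne_zero {w : CSeq} {β : Ordinal} (hw : w.len = β + 1) : w.lastVal ≠ 0 := by
  have : β < w.len := by
    rw [hw, Ordinal.add_one_eq_succ]; exact Order.lt_succ β
  have := (w.dom_iff β).1 this
  rwa [lastVal, pred_len_eq hw]

theorem lastVal_mem_im {w : CSeq} {β : Ordinal} (hw : w.len = β + 1) : w.lastVal ∈ w.im :=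
  ⟨lastVal_ne_zero hw, Ordinal.pred w.len, rfl⟩

theorem lastVal_not_mem_star {w : CSeq} {β : Ordinal} (hw : w.len = β + 1) :
    w.lastVal ∉ w.star.im := by
  rintro ⟨hn0, γ, hγ⟩
  rw [star, restrict] at hγ
  simp only at hγ
  by_cases h : γ < Ordinal.pred w.len
  · rw [if_pos h] at hγ
    rw [pred_len_eq hw] at h
    have hβlt : β < w.len := by rw [hw, Ordinal.add_one_eq_succ]; exact Order.lt_succ β
    have hγw : γ < w.len := lt_trans h hβlt
    have : γ = β := w.inj γ β hγw hβlt (by rw [hγ, lastVal, pred_len_eq hw])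
    exact absurd this (ne_of_lt h)
  · rw [if_neg h] at hγ
    exact hn0 hγ.symm

theorem im_diff_star {w : CSeq} {β : Ordinal} (hw : w.len = β + 1) :
    w.im \ w.star.im = {w.lastVal} := by
  ext n
  constructor
  · rintro ⟨⟨hn0, γ, hγ⟩, hns⟩
    have hγlt : γ < w.len := (w.dom_iff γ).2 (by rw [hγ]; exact hn0)
    have hγle : γ ≤ β := by
      rw [hw, Ordinal.add_one_eq_succ, Order.lt_succ_iff] at hγlt
      exact hγlt
    rcases lt_or_eq_of_le hγle with hlt | heq
    · exfalso
      apply hns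
      refine ⟨hn0, γ, ?_⟩
      rw [star, restrict]
      simp only
      rw [if_pos (by rw [pred_len_eq hw]; exact hlt)]
      exact hγ
    · subst heq
      have : n = w.lastVal := by rw [← hγ, lastVal, pred_len_eq hw]
      exact this
  · rintro rfl
    exact ⟨lastVal_mem_im hw, lastVal_not_mem_star hw⟩

theorem mem_A_of_ext {u s w : CSeq} (hw : w ∈ A u) (hsu : s.Ext u) (hws : w.Ext s) :
    w ∈ A s := by
  obtain ⟨hwu, hsucc, hlast⟩ := hw
  refine ⟨hws, hsucc, ?_⟩
  obtain ⟨β, hβ⟩ := hsucc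
  have hmem : w.lastVal ∈ s.im \ w.star.im :=
    ⟨im_mono hws (lastVal_mem_im hβ), lastVal_not_mem_star hβ⟩
  have hne : (s.im \ w.star.im).Nonempty := ⟨w.lastVal, hmem⟩
  apply le_antisymm
  · rw [hlast]
    exact Nat.sInf_le ⟨im_mono hsu (Nat.sInf_mem hne).1, (Nat.sInf_mem hne).2⟩
  · exact Nat.sInf_le hmem

theorem self_mem_A {s : CSeq} {β : Ordinal} (hβ : s.len = β + 1) : s ∈ A s := by
  refine ⟨ext_refl s, ⟨β, hβ⟩, ?_⟩
  rw [im_diff_star hβ, csInf_singleton]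

/-- key edge analysis -/
theorem edge_case {s u v : CSeq} (hadj : G.Adj u v) (hu : s.Ext u) (hv : ¬ s.Ext v) :
    v ∈ Astar s := by
  rw [G, SimpleGraph.fromRel_adj] at hadj
  obtain ⟨hne, hrel | hrel⟩ := hadj
  · -- u ∈ Astar v : then s.Ext v, contradiction
    obtain ⟨w, hwA, hwu⟩ := hrel
    exact absurd (ext_trans hu (ext_trans (hwu ▸ star_ext w) hwA.1)) hv
  · -- v ∈ Astar u
    obtain ⟨w, hwA, hwv⟩ := hrel
    have hwEu : w.Ext u := hwA.1
    obtain ⟨β, hβ⟩ := hwA.2.1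
    rcases le_total w.len s.len with hlen | hlen
    · exact ⟨w, mem_A_of_ext hwA hu (ext_of_ext_ext hwEu hu hlen), hwv⟩
    · have hsw : s.Ext w := ext_of_ext_ext hu hwEu hlen
      have hβs : β < s.len := by
        by_contra hc
        push_neg at hc
        apply hv
        rw [← hwv]
        intro γ hγ
        have hγlt : γ < β := lt_of_lt_of_le ((s.dom_iff γ).2 hγ) hc
        rw [star, restrict]
        simp only
        rw [if_pos (by rw [pred_len_eq hβ]; exact hγlt)]
        exact hsw γ hγ
      have hlen' : s.len = w.len := by
        apply le_antisymm (len_le_of_ext hsw)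
        rw [hβ, Ordinal.add_one_eq_succ, Order.succ_le_iff]
        exact hβs
      have hsweq : s = w := eq_of_ext_of_len_eq hsw hlen'
      refine ⟨s, self_mem_A (hlen' ▸ hβ), ?_⟩
      rw [hsweq]; exact hwv

theorem walk_flip {P : CSeq → Prop} {a b : CSeq} (p : G.Walk a b) (ha : P a) (hb : ¬ P b) :
    ∃ u v, G.Adj u v ∧ P u ∧ ¬ P v ∧ v ∈ p.support := by
  induction p with
  | nil => exact absurd ha hb
  | @cons x y z h q ih =>
    by_cases hy : P y
    · obtain ⟨u, v, h1, h2, h3, h4⟩ := ih hy hb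
      refine ⟨u, v, h1, h2, h3, ?_⟩
      rw [SimpleGraph.Walk.support_cons]
      exact List.mem_cons_of_mem _ h4
    · refine ⟨x, y, h, ha, hy, ?_⟩
      rw [SimpleGraph.Walk.support_cons]
      exact List.mem_cons_of_mem _ q.start_mem_support

end CSeq

open CSeq in
/-- Let `t, t'` be incomparable in the extension order, let
`α ∈ dom t ∩ dom t'` be minimal with `t(α) ≠ t'(α)`, and let `s = t ↾ (α+1)`.
Then every path in `G` from `t` to `t'` meets `A*_s`. -/
theorem stmt6 (t t' : CSeq) (h1 : ¬ t.Ext t') (h2 : ¬ t'.Ext t)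
    (α : Ordinal) (hαt : α < t.len) (hαt' : α < t'.len)
    (hne : t.f α ≠ t'.f α) (hmin : ∀ β < α, t.f β = t'.f β)
    (s : CSeq) (hs : s.Ext t) (hslen : s.len = α + 1) :
    ∀ p : G.Walk t t', p.IsPath → ∃ v ∈ p.support, v ∈ Astar s := by
  intro p _
  have hsα : s.f α ≠ 0 := (s.dom_iff α).1 (by
    rw [hslen, Ordinal.add_one_eq_succ]; exact Order.lt_succ α)
  have hst' : ¬ s.Ext t' := by
    intro hext
    apply hne
    rw [hs α hsα, hext α hsα]
  obtain ⟨u, v, hadj, hPu, hPv, hvs⟩ := CSeq.walk_flip (P := fun v => s.Ext v) p hs hst'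
  exact ⟨v, hvs, CSeq.edge_case hadj hPu hPv⟩
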